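/- Let φ > 0 be real and set y = (φ − φ^(-1))/2, Q(x) = 1/(x⁴ + 2a x² + 1)^(m+1) for a real a > −1 and natural m. Define Q₁(y) = [Q(φ) + Q(−φ^(-1))] + ((φ² − 1)/(φ² + 1))·[Q(φ) − Q(−φ^(-1))]. Then Q₁(y) = T_m(2y) / (2^m (1 + a + 2y²)^(m+1)), where T_m(z) = Σ_{k=0}^m C(m+k, m-k) z^(2k). -/

import Mathlib

open Finset

private lemma t_rec (c : ℝ) (m : ℕ) :
    ∑ k ∈ range (m+2), (Nat.choose (m+1+k) (2*k+1) : ℝ) * c^k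
      = (∑ k ∈ range (m+1), (Nat.choose (m+k) (2*k+1) : ℝ) * c^k)
        + ∑ k ∈ range (m+1), (Nat.choose (m+k) (2*k) : ℝ) * c^k := by
  have h : ∀ k, (Nat.choose (m+1+k) (2*k+1) : ℝ) * c^k
      = (Nat.choose (m+k) (2*k) : ℝ) * c^k + (Nat.choose (m+k) (2*k+1) : ℝ) * c^k := by
    intro k
    have e : m+1+k = (m+k)+1 := by omega
    rw [e, Nat.choose_succ_succ]
    push_cast; ring
  rw [sum_congr rfl (fun k _ => h k), sum_add_distrib,
    sum_range_succ (fun k => (Nat.choose (m+k) (2*k) : ℝ) * c^k) (m+1),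
    sum_range_succ (fun k => (Nat.choose (m+k) (2*k+1) : ℝ) * c^k) (m+1)]
  have z1 : (Nat.choose (m+(m+1)) (2*(m+1)) : ℝ) = 0 := by
    rw [Nat.choose_eq_zero_of_lt (by omega)]; norm_num
  have z2 : (Nat.choose (m+(m+1)) (2*(m+1)+1) : ℝ) = 0 := by
    rw [Nat.choose_eq_zero_of_lt (by omega)]; norm_num
  rw [z1, z2]; ring

private lemma s_rec (c : ℝ) (m : ℕ) :
    ∑ k ∈ range (m+2), (Nat.choose (m+1+k) (2*k) : ℝ) * c^k
      = (1+c) * (∑ k ∈ range (m+1), (Nat.choose (m+k) (2*k) : ℝ) * c^k)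
        + c * (∑ k ∈ range (m+1), (Nat.choose (m+k) (2*k+1) : ℝ) * c^k) := by
  rw [sum_range_succ' (fun k => (Nat.choose (m+1+k) (2*k) : ℝ) * c^k) (m+1)]
  have h : ∀ k, (Nat.choose (m+1+(k+1)) (2*(k+1)) : ℝ) * c^(k+1)
      = (Nat.choose (m+1+k) (2*k+2) : ℝ) * c^(k+1)
        + (Nat.choose (m+k) (2*k) : ℝ) * c^(k+1)
        + (Nat.choose (m+k) (2*k+1) : ℝ) * c^(k+1) := by
    intro k
    have e : m+1+(k+1) = ((m+k)+1)+1 := by omega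
    have e2 : 2*(k+1) = (2*k+1)+1 := by omega
    rw [e, e2, Nat.choose_succ_succ, Nat.choose_succ_succ]
    push_cast
    have e3 : (m+k)+1 = m+1+k := by omega
    rw [e3]; ring
  rw [sum_congr rfl (fun k _ => h k)]
  rw [sum_add_distrib, sum_add_distrib]
  have key : (∑ k ∈ range (m+1), (Nat.choose (m+1+k) (2*k+2) : ℝ) * c^(k+1))
      + (Nat.choose (m+1+0) (2*0) : ℝ) * c^0
      = ∑ k ∈ range (m+1), (Nat.choose (m+k) (2*k) : ℝ) * c^k := by
    rw [sum_range_succ]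
    have z : (Nat.choose (m+1+m) (2*m+2) : ℝ) = 0 := by
      rw [Nat.choose_eq_zero_of_lt (by omega)]; norm_num
    rw [z]
    rw [sum_range_succ' (fun k => (Nat.choose (m+k) (2*k) : ℝ) * c^k) m]
    simp only [Nat.choose_zero_right, pow_zero, Nat.add_zero]
    norm_num
    apply sum_congr rfl
    intro k _
    have e : m+1+k = m+(k+1) := by omega
    have e' : 2*k+2 = 2*(k+1) := by omega
    rw [e, e']
  have e1 : ∀ k:ℕ, (Nat.choose (m+k) (2*k) : ℝ) * c^(k+1) = c * ((Nat.choose (m+k) (2*k) : ℝ) * c^k) := by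
    intro k; ring
  have e2 : ∀ k:ℕ, (Nat.choose (m+k) (2*k+1) : ℝ) * c^(k+1) = c * ((Nat.choose (m+k) (2*k+1) : ℝ) * c^k) := by
    intro k; ring
  rw [sum_congr rfl (fun k _ => e1 k), sum_congr rfl (fun k _ => e2 k), ← mul_sum, ← mul_sum]
  linarith [key]

private lemma key_ind (u : ℝ) (hu : u ≠ 0) (m : ℕ) :
    (1+u) * u^m * (∑ k ∈ range (m+1), (Nat.choose (m+k) (2*k) : ℝ) * ((u-1)^2/u)^k)
        = 1 + u^(2*m+1)
    ∧ (1+u) * (u-1) * u^m * (∑ k ∈ range (m+1), (Nat.choose (m+k) (2*k+1) : ℝ) * ((u-1)^2/u)^k)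
        = u^(2*m+1) - u := by
  induction m with
  | zero => simp
  | succ m ih =>
    obtain ⟨hS, hT⟩ := ih
    set c : ℝ := (u-1)^2/u with hc
    have hcu : c * u = (u-1)^2 := div_mul_cancel₀ _ hu
    set S : ℝ := ∑ k ∈ range (m+1), (Nat.choose (m+k) (2*k) : ℝ) * c^k with hSdef
    set T : ℝ := ∑ k ∈ range (m+1), (Nat.choose (m+k) (2*k+1) : ℝ) * c^k with hTdef
    rw [show m+1+1 = m+2 from rfl]
    constructor
    · rw [s_rec, ← hSdef, ← hTdef]
      linear_combination (u^2-u+1) * hS + (u-1) * hT + (1+u) * u^m * (S+T) * hcu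
    · rw [t_rec, ← hSdef, ← hTdef]
      linear_combination u * hT + u*(u-1) * hS

private lemma main_calc (a u S : ℝ) (hu : 0 < u) (hD : 0 < u^2+2*a*u+1) (m : ℕ)
    (hA : (1+u)*u^m*S = 1+u^(2*m+1)) :
    (1/(u^2+2*a*u+1)^(m+1) + u^(2*(m+1))/(u^2+2*a*u+1)^(m+1))
      + ((u-1)/(u+1)) * (1/(u^2+2*a*u+1)^(m+1) - u^(2*(m+1))/(u^2+2*a*u+1)^(m+1))
    = S / (2^m * ((u^2+2*a*u+1)/(2*u))^(m+1)) := by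
  have hune : u ≠ 0 := ne_of_gt hu
  have hu1 : (u:ℝ)+1 ≠ 0 := by positivity
  have hDne : (u^2+2*a*u+1) ≠ 0 := ne_of_gt hD
  have hDp : (u^2+2*a*u+1)^(m+1) ≠ 0 := pow_ne_zero _ hDne
  rw [div_pow, mul_pow]
  field_simp
  congr 1
  linear_combination (-(2^(m+1) * u)) * hA

theorem Q1_formula (a : ℝ) (ha : -1 < a) (m : ℕ) (φ : ℝ) (hφ : 0 < φ)
    (y : ℝ) (hy : y = (φ - φ⁻¹) / 2)
    (Q : ℝ → ℝ) (hQ : ∀ x, Q x = 1 / (x ^ 4 + 2 * a * x ^ 2 + 1) ^ (m + 1)) :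
    (Q φ + Q (-φ⁻¹)) + ((φ ^ 2 - 1) / (φ ^ 2 + 1)) * (Q φ - Q (-φ⁻¹)) =
      (∑ k ∈ range (m + 1), (Nat.choose (m + k) (m - k) : ℝ) * (2 * y) ^ (2 * k)) /
        (2 ^ m * (1 + a + 2 * y ^ 2) ^ (m + 1)) := by
  have hφne : φ ≠ 0 := ne_of_gt hφ
  obtain ⟨u, hudef⟩ : ∃ u : ℝ, u = φ^2 := ⟨φ^2, rfl⟩
  have hu0 : 0 < u := by rw [hudef]; positivity
  have hu : u ≠ 0 := ne_of_gt hu0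
  have hD : 0 < u^2 + 2*a*u + 1 := by
    nlinarith [sq_nonneg (u-1), mul_pos hu0 (by linarith : (0:ℝ) < a+1)]
  have hQ1 : Q φ = 1 / (u^2 + 2*a*u + 1)^(m+1) := by
    rw [hQ φ]
    congr 2
    rw [hudef]; ring
  have hQ2 : Q (-φ⁻¹) = u^(2*(m+1)) / (u^2 + 2*a*u + 1)^(m+1) := by
    rw [hQ (-φ⁻¹)]
    have h1 : (-φ⁻¹)^4 + 2*a*(-φ⁻¹)^2 + 1 = (u^2 + 2*a*u + 1)/u^2 := by
      rw [hudef]; field_simp; ring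
    rw [h1, div_pow, one_div_div, ← pow_mul]
  have hsum : ∑ k ∈ range (m + 1), (Nat.choose (m + k) (m - k) : ℝ) * (2 * y) ^ (2 * k)
      = ∑ k ∈ range (m+1), (Nat.choose (m+k) (2*k) : ℝ) * ((u-1)^2/u)^k := by
    apply sum_congr rfl
    intro k hk
    have hk' : k ≤ m := by
      have := mem_range.mp hk; omega
    have h2 : (2*y)^2 = (u-1)^2/u := by
      rw [hy, hudef]; field_simp
    rw [show m-k = (m+k)-(2*k) by omega, Nat.choose_symm (by omega), pow_mul, h2]
  have hden : 1 + a + 2*y^2 = (u^2 + 2*a*u + 1)/(2*u) := by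
    rw [hy, hudef]; field_simp; ring
  obtain ⟨hA, -⟩ := key_ind u hu m
  rw [hQ1, hQ2, hsum, hden, ← hudef]
  exact main_calc a u _ hu0 hD m hA
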